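/- Let Ξ ⊆ L^0(X;F) be infinitely F-decomposable (for every sequence ξ_n ∈ Ξ and every countable F-measurable partition {A_n} of Ω, Σ_n ξ_n 1_{A_n} ∈ Ξ), and let G be an a.s. nonempty random open set. Then L^0(G;F) + Ξ = L^0(G;F) + cl_0 Ξ, where cl_0 denotes closure in probability and L^0(G;F) is the set of measurable selections of G. -/

import Mathlib

open MeasureTheory

/-- Proposition 2.10: for an infinitely F-decomposable family Ξ and an a.s. nonempty
random open set G, L⁰(G;F) + Ξ = L⁰(G;F) + cl₀ Ξ. -/
theorem stmt5 {Ω X : Type*} [MeasurableSpace Ω] [NormedAddCommGroup X] [NormedSpace ℝ X]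
    [CompleteSpace X] [TopologicalSpace.SeparableSpace X] [MeasurableSpace X] [BorelSpace X]
    (P : Measure Ω) [IsProbabilityMeasure P] (hPc : P.IsComplete)
    (Ξ : Set (Ω → X)) (hmeas : ∀ ξ ∈ Ξ, Measurable ξ)
    (hdec : ∀ f : ℕ → Ω → X, (∀ n, f n ∈ Ξ) →
      ∀ A : ℕ → Set Ω, (∀ n, MeasurableSet (A n)) →
        Pairwise (Function.onFun Disjoint A) → (⋃ n, A n) = Set.univ →
        ∀ g : Ω → X, (∀ n, ∀ ω ∈ A n, g ω = f n ω) → g ∈ Ξ)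
    (G : Ω → Set X) (hGgr : MeasurableSet {p : Ω × X | p.2 ∈ G p.1})
    (hGo : ∀ ω, IsOpen (G ω)) (hGne : ∀ᵐ ω ∂P, (G ω).Nonempty) :
    Set.image2 (· + ·) {γ : Ω → X | Measurable γ ∧ ∀ᵐ ω ∂P, γ ω ∈ G ω} Ξ =
      Set.image2 (· + ·) {γ : Ω → X | Measurable γ ∧ ∀ᵐ ω ∂P, γ ω ∈ G ω}
        {γ : Ω → X | Measurable γ ∧ ∃ f : ℕ → Ω → X, (∀ n, f n ∈ Ξ) ∧
          TendstoInMeasure P f Filter.atTop γ} := by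
  classical
  apply Set.Subset.antisymm
  · -- Ξ ⊆ cl₀ Ξ
    refine Set.image2_subset_left fun ξ hξ => ?_
    refine ⟨hmeas ξ hξ, fun _ => ξ, fun _ => hξ, fun ε hε => ?_⟩
    have hem : {x | ε ≤ edist (ξ x) (ξ x)} = (∅ : Set Ω) := by
      ext x; simp [edist_self, hε.not_ge]
    simp only [hem, measure_empty]
    exact tendsto_const_nhds
  · rintro h ⟨γ, ⟨hγm, hγG⟩, ξ, ⟨hξm, f, hfΞ, hf⟩, rfl⟩
    obtain ⟨ns, -, hae⟩ := hf.exists_seq_tendsto_ae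
    -- B k : set where shifting by f (ns k) stays in G
    set B : ℕ → Set Ω := fun k => {ω | γ ω + ξ ω - f (ns k) ω ∈ G ω} with hB
    have hBm : ∀ k, MeasurableSet (B k) := by
      intro k
      have hmap : Measurable fun ω => (ω, γ ω + ξ ω - f (ns k) ω) :=
        measurable_id.prodMk ((hγm.add hξm).sub (hmeas _ (hfΞ (ns k))))
      exact hmap hGgr
    -- total predicate for Nat.find
    set p : ℕ → Ω → Prop := fun k ω => ω ∈ B k ∨ ∀ j, ω ∉ B j with hp
    have hptot : ∀ ω, ∃ k, p k ω := by
      intro ω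
      by_cases h : ∃ k, ω ∈ B k
      · obtain ⟨k, hk⟩ := h; exact ⟨k, Or.inl hk⟩
      · exact ⟨0, Or.inr fun j hj => h ⟨j, hj⟩⟩
    have hpm : ∀ k, MeasurableSet {ω | p k ω} := by
      intro k
      have : {ω | p k ω} = B k ∪ ⋂ j, (B j)ᶜ := by
        ext ω; simp [hp, Set.mem_iUnion, Set.mem_iInter]
      rw [this]
      exact (hBm k).union (MeasurableSet.iInter fun j => (hBm j).compl)
    have hptot' : ∀ ω, ∃ k, p k ω := hptot
    set idx : Ω → ℕ := fun ω => Nat.find (hptot' ω) with hidx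
    have hidxm : Measurable idx := measurable_find hptot' fun k => hpm k
    set g : Ω → X := fun ω => f (ns (idx ω)) ω with hg
    have hgm : Measurable g :=
      Measurable.find (fun k => hmeas _ (hfΞ (ns k))) hpm hptot'
    -- g ∈ Ξ via decomposability over the partition A k = idx ⁻¹' {k}
    have hgΞ : g ∈ Ξ := by
      refine hdec (fun k => f (ns k)) (fun k => hfΞ (ns k)) (fun k => idx ⁻¹' {k})
        (fun k => hidxm (measurableSet_singleton k)) ?_ ?_ g ?_
      · intro i j hij
        simp only [Function.onFun, Set.disjoint_left]
        rintro ω (hi : idx ω = i) (hj : idx ω = j)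
        exact hij (hi ▸ hj ▸ rfl)
      · ext ω; simp
      · intro k ω hω
        have : idx ω = k := hω
        simp [hg, this]
    -- the shifted selection
    refine ⟨fun ω => γ ω + ξ ω - g ω, ⟨(hγm.add hξm).sub hgm, ?_⟩, g, hgΞ, ?_⟩
    · -- a.e. membership in G
      filter_upwards [hγG, hae] with ω hωG hωt
      have hex : ∃ k, ω ∈ B k := by
        have htend : Filter.Tendsto (fun k => γ ω + ξ ω - f (ns k) ω) Filter.atTop
            (nhds (γ ω + ξ ω - ξ ω)) :=
          Filter.Tendsto.sub tendsto_const_nhds hωt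
        have : γ ω + ξ ω - ξ ω = γ ω := by abel
        rw [this] at htend
        have := htend.eventually ((hGo ω).eventually_mem hωG)
        obtain ⟨k, hk⟩ := this.exists
        exact ⟨k, hk⟩
      have hpfind : p (idx ω) ω := Nat.find_spec (hptot' ω)
      have : ω ∈ B (idx ω) := by
        rcases hpfind with h | h
        · exact h
        · exact absurd hex (by push_neg; exact h)
      exact this
    · funext ω
      simp only [Pi.add_apply]
      abel
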